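/- arXiv:2011.10262 — 3 statements merged into one kernel-verified Lean document; each statement's English description precedes it below -/
import Mathlib

section
/- Let a, b > 0 and r be a real number. Then for every x ≥ 0, the integral ∫_x^∞ u^{a-1} (Log u)^r e^{-b u^a} du is finite, where Log u := log(max(u, e)). Moreover, as x → ∞, ∫_x^∞ u^{a-1} (Log u)^r e^{-b u^a} du = O((1 + (Log x)^r) e^{-b x^a}). -/
open Filter Asymptotics MeasureTheory Set Real

noncomputable def Log (x : ℝ) : ℝ := Real.log (max x (Real.exp 1))

lemma one_le_Log (x : ℝ) : 1 ≤ Log x := by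
  have : Real.exp 1 ≤ max x (Real.exp 1) := le_max_right _ _
  calc (1:ℝ) = Real.log (Real.exp 1) := (Real.log_exp 1).symm
  _ ≤ Log x := Real.log_le_log (Real.exp_pos 1) this

lemma Log_pos (x : ℝ) : 0 < Log x := lt_of_lt_of_le one_pos (one_le_Log x)

lemma continuous_Log : Continuous Log := by
  apply Real.continuousOn_log.comp_continuous (continuous_id.max continuous_const)
  intro x
  exact ne_of_gt (lt_of_lt_of_le (Real.exp_pos 1) (le_max_right _ _))

-- L4
lemma bound_rpow_exp (q c : ℝ) (hq : 0 ≤ q) (hc : 0 < c) :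
    ∃ C : ℝ, 1 ≤ C ∧ ∀ w : ℝ, 0 ≤ w → (1 + w) ^ q ≤ C * Real.exp (c * w) := by
  have h := tendsto_rpow_mul_exp_neg_mul_atTop_nhds_zero q c hc
  have h1 : ∀ᶠ t in atTop, t ^ q * Real.exp (-c * t) ≤ 1 :=
    (h.eventually (eventually_le_nhds one_pos))
  obtain ⟨W, hW⟩ := h1.exists_forall_of_atTop
  set W' : ℝ := max W 1 with hW'
  refine ⟨max (Real.exp c) (W' ^ q) + 1, ?_, ?_⟩
  · have : (0:ℝ) ≤ max (Real.exp c) (W' ^ q) :=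
      le_trans (Real.exp_pos c).le (le_max_left _ _)
    linarith
  intro w hw
  set C := max (Real.exp c) (W' ^ q) + 1 with hC
  have hCe : Real.exp c ≤ C := by
    have := le_max_left (Real.exp c) (W' ^ q); linarith
  have hCW : W' ^ q ≤ C := by
    have := le_max_right (Real.exp c) (W' ^ q); linarith
  have hexp : (1:ℝ) ≤ Real.exp (c * w) :=
    Real.one_le_exp (by positivity)
  have hC0 : (0:ℝ) ≤ C := le_trans (Real.exp_pos c).le hCe
  rcases le_or_gt W' (1 + w) with hcase | hcase
  · have hge : W ≤ 1 + w := le_trans (le_max_left W 1) hcase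
    have h3 : (1 + w) ^ q / Real.exp (c * (1 + w)) ≤ 1 := by
      rw [div_eq_mul_inv, ← Real.exp_neg]
      have := hW (1 + w) hge
      rw [neg_mul] at this
      exact this
    have h2 : (1 + w) ^ q ≤ Real.exp (c * (1 + w)) :=
      (div_le_one (Real.exp_pos _)).mp h3
    calc (1 + w) ^ q ≤ Real.exp (c * (1 + w)) := h2
      _ = Real.exp c * Real.exp (c * w) := by rw [← Real.exp_add]; ring_nf
      _ ≤ C * Real.exp (c * w) :=
          mul_le_mul_of_nonneg_right hCe (Real.exp_pos _).le
  · have hx : (0:ℝ) ≤ 1 + w := by linarith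
    have h2 : (1 + w) ^ q ≤ W' ^ q :=
      Real.rpow_le_rpow hx hcase.le hq
    calc (1 + w) ^ q ≤ W' ^ q := h2
      _ ≤ C := hCW
      _ = C * 1 := (mul_one C).symm
      _ ≤ C * Real.exp (c * w) := mul_le_mul_of_nonneg_left hexp hC0

lemma key_deriv (a c : ℝ) (hc : 0 < c) (u : ℝ) (hu : 0 < u) (hac : a * c ≠ 0) :
    HasDerivAt (fun t : ℝ => -(1/(a*c)) * Real.exp (-(c * t ^ a)))
      (u ^ (a-1) * Real.exp (-(c * u ^ a))) u := by
  have h1 : HasDerivAt (fun t : ℝ => t ^ a) (a * u ^ (a-1)) u :=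
    Real.hasDerivAt_rpow_const (Or.inl hu.ne')
  have h2 : HasDerivAt (fun t : ℝ => -(c * t ^ a)) (-(c * (a * u^(a-1)))) u :=
    (h1.const_mul c).neg
  have h3 : HasDerivAt (fun t : ℝ => Real.exp (-(c * t ^ a)))
      (Real.exp (-(c * u ^ a)) * (-(c * (a * u^(a-1))))) u :=
    h2.exp
  have h4 := h3.const_mul (-(1/(a*c)))
  refine h4.congr_deriv ?_
  field_simp [left_ne_zero_of_mul hac]

lemma key_cont (a c x : ℝ) (ha : 0 < a) :
    ContinuousAt (fun t : ℝ => -(1/(a*c)) * Real.exp (-(c * t ^ a))) x := by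
  have h : ContinuousAt (fun t : ℝ => t ^ a) x :=
    Real.continuousAt_rpow_const x a (Or.inr ha.le)
  exact (Real.continuous_exp.continuousAt.comp ((h.const_mul c).neg)).const_mul _

lemma key_tendsto (a c : ℝ) (ha : 0 < a) (hc : 0 < c) :
    Tendsto (fun t : ℝ => -(1/(a*c)) * Real.exp (-(c * t ^ a))) atTop (nhds 0) := by
  have h : Tendsto (fun t : ℝ => c * t ^ a) atTop atTop :=
    (tendsto_rpow_atTop ha).const_mul_atTop hc
  have h2 : Tendsto (fun t : ℝ => Real.exp (-(c * t ^ a))) atTop (nhds 0) := by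
    have := Real.tendsto_exp_neg_atTop_nhds_zero.comp h
    simpa [Function.comp_def] using this
  simpa using h2.const_mul (-(1/(a*c)))

lemma key_integrable (a c x : ℝ) (ha : 0 < a) (hc : 0 < c) (hx : 0 ≤ x) :
    IntegrableOn (fun u : ℝ => u ^ (a-1) * Real.exp (-(c * u ^ a))) (Ioi x) := by
  have hac : a * c ≠ 0 := by positivity
  exact integrableOn_Ioi_deriv_of_nonneg (key_cont a c x ha).continuousWithinAt
    (fun u hu => key_deriv a c hc u (lt_of_le_of_lt hx hu) hac)
    (fun u hu => mul_nonneg (Real.rpow_nonneg (lt_of_le_of_lt hx hu).le _) (Real.exp_pos _).le)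
    (key_tendsto a c ha hc)

lemma key_value (a c x : ℝ) (ha : 0 < a) (hc : 0 < c) (hx : 0 ≤ x) :
    ∫ u in Ioi x, u ^ (a-1) * Real.exp (-(c * u ^ a)) = Real.exp (-(c * x ^ a)) / (a * c) := by
  have hac : a * c ≠ 0 := by positivity
  have h := integral_Ioi_of_hasDerivAt_of_tendsto
    (key_cont a c x ha).continuousWithinAt
    (fun u hu => key_deriv a c hc u (lt_of_le_of_lt hx hu) hac)
    (key_integrable a c x ha hc hx) (key_tendsto a c ha hc)
  rw [h]
  field_simp
  ring

lemma Log_rpow_le (r u : ℝ) (hu : 0 < u) : Log u ^ r ≤ 1 + u ^ max r 0 := by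
  have hum : (0:ℝ) ≤ u ^ max r 0 := Real.rpow_nonneg hu.le _
  rcases le_or_gt u (Real.exp 1) with h | h
  · have hL : Log u = 1 := by rw [Log, max_eq_right h, Real.log_exp]
    rw [hL, Real.one_rpow]
    linarith
  · have hL : Log u = Real.log u := by rw [Log, max_eq_left h.le]
    have h1 : 1 ≤ Real.log u := by
      calc (1:ℝ) = Real.log (Real.exp 1) := (Real.log_exp 1).symm
        _ ≤ Real.log u := Real.log_le_log (Real.exp_pos 1) h.le
    have h2 : Real.log u ^ r ≤ Real.log u ^ max r 0 :=
      Real.rpow_le_rpow_of_exponent_le h1 (le_max_left r 0)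
    have h3 : Real.log u ^ max r 0 ≤ u ^ max r 0 :=
      Real.rpow_le_rpow (by linarith)
        (by linarith [Real.log_le_sub_one_of_pos hu]) (le_max_right r 0)
    rw [hL]
    linarith

lemma f_contOn (a b r : ℝ) (ha : 0 < a) :
    ContinuousOn (fun u : ℝ => u ^ (a - 1) * Log u ^ r * Real.exp (-(b * u ^ a)))
      (Ioi 0) := by
  intro u hu
  have hu0 : (0:ℝ) < u := hu
  have c1 : ContinuousAt (fun u : ℝ => u ^ (a-1)) u :=
    Real.continuousAt_rpow_const u (a-1) (Or.inl hu0.ne')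
  have c2 : ContinuousAt (fun u : ℝ => Log u ^ r) u :=
    ContinuousAt.rpow_const continuous_Log.continuousAt (Or.inl (Log_pos u).ne')
  have c3 : ContinuousAt (fun u : ℝ => Real.exp (-(b * u ^ a))) u := by
    have h := Real.continuousAt_rpow_const u a (Or.inr ha.le)
    exact Real.continuous_exp.continuousAt.comp ((h.const_mul b).neg)
  exact ((c1.mul c2).mul c3).continuousWithinAt

lemma f_integrableOn0 (a b r : ℝ) (ha : 0 < a) (hb : 0 < b) :
    IntegrableOn (fun u : ℝ => u ^ (a - 1) * Log u ^ r * Real.exp (-(b * u ^ a)))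
      (Ioi 0) := by
  have hb2 : (0:ℝ) < b / 2 := by linarith
  obtain ⟨C, hC1, hC⟩ := bound_rpow_exp (max r 0 / a) (b/2) (by positivity) hb2
  have hg : IntegrableOn
      (fun u : ℝ => u ^ (a-1) * Real.exp (-(b * u ^ a))
        + C * (u ^ (a-1) * Real.exp (-(b/2 * u ^ a)))) (Ioi 0) :=
    (key_integrable a b 0 ha hb le_rfl).add
      ((key_integrable a (b/2) 0 ha hb2 le_rfl).const_mul C)
  apply Integrable.mono' hg
    ((f_contOn a b r ha).aestronglyMeasurable measurableSet_Ioi)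
  filter_upwards [ae_restrict_mem measurableSet_Ioi] with u hu
  have hu0 : (0:ℝ) < u := hu
  have h1 : Log u ^ r ≤ 1 + u ^ max r 0 := Log_rpow_le r u hu0
  have h2 : u ^ max r 0 ≤ C * Real.exp (b/2 * u ^ a) := by
    have e1 : u ^ max r 0 = (u ^ a) ^ (max r 0 / a) := by
      rw [← Real.rpow_mul hu0.le]
      congr 1
      field_simp
    have e2 : (u ^ a) ^ (max r 0 / a) ≤ (1 + u ^ a) ^ (max r 0 / a) :=
      Real.rpow_le_rpow (Real.rpow_nonneg hu0.le _) (by linarith) (by positivity)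
    have e3 := hC (u ^ a) (Real.rpow_nonneg hu0.le _)
    rw [e1]; exact e2.trans e3
  have hpos1 : (0:ℝ) ≤ u ^ (a-1) := Real.rpow_nonneg hu0.le _
  have hLr : (0:ℝ) ≤ Log u ^ r := Real.rpow_nonneg (Log_pos u).le _
  have hexp : (0:ℝ) < Real.exp (-(b * u ^ a)) := Real.exp_pos _
  have hfn : (0:ℝ) ≤ u ^ (a-1) * Log u ^ r * Real.exp (-(b * u ^ a)) :=
    mul_nonneg (mul_nonneg hpos1 hLr) hexp.le
  rw [Real.norm_eq_abs, abs_of_nonneg hfn]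
  have key : Real.exp (b/2 * u ^ a) * Real.exp (-(b * u ^ a))
      = Real.exp (-(b/2 * u ^ a)) := by
    rw [← Real.exp_add]; ring_nf
  calc u ^ (a-1) * Log u ^ r * Real.exp (-(b * u ^ a))
      ≤ u ^ (a-1) * (1 + u ^ max r 0) * Real.exp (-(b * u ^ a)) :=
        mul_le_mul_of_nonneg_right (mul_le_mul_of_nonneg_left h1 hpos1) hexp.le
    _ = u ^ (a-1) * Real.exp (-(b * u ^ a))
        + u ^ (a-1) * u ^ max r 0 * Real.exp (-(b * u ^ a)) := by ring
    _ ≤ u ^ (a-1) * Real.exp (-(b * u ^ a))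
        + u ^ (a-1) * (C * Real.exp (b/2 * u ^ a)) * Real.exp (-(b * u ^ a)) := by
        have := mul_le_mul_of_nonneg_right
          (mul_le_mul_of_nonneg_left h2 hpos1) hexp.le
        linarith
    _ = u ^ (a-1) * Real.exp (-(b * u ^ a))
        + C * (u ^ (a-1) * Real.exp (-(b/2 * u ^ a))) := by
        rw [← key]; ring

lemma evt_bound (a b r : ℝ) (ha : 0 < a) (hb : 0 < b) :
    ∃ C : ℝ, 1 ≤ C ∧ ∀ᶠ x : ℝ in atTop, ∀ u ∈ Ici x,
      Log u ^ r ≤ C * Log x ^ r * Real.exp (b/2 * (u ^ a - x ^ a)) := by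
  have hb2 : (0:ℝ) < b/2 := by linarith
  obtain ⟨C, hC1, hC⟩ := bound_rpow_exp (max r 0) (b/2) (le_max_right r 0) hb2
  refine ⟨C, hC1, ?_⟩
  have hev1 : ∀ᶠ x : ℝ in atTop, Real.exp 1 ≤ x := eventually_ge_atTop _
  have hev2 : ∀ᶠ x : ℝ in atTop, 1 ≤ a * x ^ a :=
    ((tendsto_rpow_atTop ha).const_mul_atTop ha).eventually_ge_atTop 1
  filter_upwards [hev1, hev2] with x hx1 hx2 u hu
  have hx0 : (0:ℝ) < x := lt_of_lt_of_le (Real.exp_pos 1) hx1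
  have hu0 : (0:ℝ) < u := lt_of_lt_of_le hx0 hu
  have hLx : Log x = Real.log x := by rw [Log, max_eq_left hx1]
  have hLu : Log u = Real.log u := by rw [Log, max_eq_left (hx1.trans hu)]
  have hlogx : 1 ≤ Real.log x := by
    calc (1:ℝ) = Real.log (Real.exp 1) := (Real.log_exp 1).symm
      _ ≤ Real.log x := Real.log_le_log (Real.exp_pos 1) hx1
  have hlogu : Real.log x ≤ Real.log u := Real.log_le_log hx0 hu
  have hxa : x ^ a ≤ u ^ a := Real.rpow_le_rpow hx0.le hu ha.le
  set w := u ^ a - x ^ a with hw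
  have hw0 : (0:ℝ) ≤ w := by simp only [hw]; linarith
  have hexp1 : (1:ℝ) ≤ Real.exp (b/2 * w) := Real.one_le_exp (by positivity)
  rcases lt_or_ge r 0 with hr | hr
  · have hLle : Log x ≤ Log u := by rw [hLx, hLu]; exact hlogu
    have h := Real.rpow_le_rpow_of_nonpos (Log_pos x) hLle hr.le
    have hLxr : (0:ℝ) ≤ Log x ^ r := Real.rpow_nonneg (Log_pos x).le _
    have s1 : Log x ^ r ≤ C * Log x ^ r := le_mul_of_one_le_left hLxr hC1
    have s2 : C * Log x ^ r ≤ C * Log x ^ r * Real.exp (b/2 * w) :=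
      le_mul_of_one_le_right (mul_nonneg (by linarith) hLxr) hexp1
    linarith
  · have hxap : (0:ℝ) < x ^ a := Real.rpow_pos_of_pos hx0 a
    have huap : (0:ℝ) < u ^ a := Real.rpow_pos_of_pos hu0 a
    have k1 : a * (Real.log u - Real.log x) = Real.log (u ^ a / x ^ a) := by
      rw [Real.log_div huap.ne' hxap.ne', Real.log_rpow hu0, Real.log_rpow hx0]
      ring
    have k3 : Real.log (u ^ a / x ^ a) ≤ u ^ a / x ^ a - 1 :=
      Real.log_le_sub_one_of_pos (by positivity)
    have k4 : a * (Real.log u - Real.log x) ≤ w / x ^ a := by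
      rw [k1]
      refine k3.trans (le_of_eq ?_)
      field_simp
      exact hw.symm
    have k5 : Real.log u - Real.log x ≤ w / (x ^ a * a) := by
      rw [le_div_iff₀ (by positivity)]
      nlinarith [k4, (le_div_iff₀ hxap).mp (le_refl (w / x ^ a))]
    have k6 : w / (x ^ a * a) ≤ w := by
      apply div_le_self hw0
      nlinarith
    have k8 : Real.log u ≤ Real.log x * (1 + w) := by nlinarith
    have k9 : Log u ^ r ≤ (Real.log x * (1 + w)) ^ r := by
      rw [hLu]
      exact Real.rpow_le_rpow (by linarith) k8 hr
    have k10 : (Real.log x * (1 + w)) ^ r = Real.log x ^ r * (1 + w) ^ r :=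
      Real.mul_rpow (by linarith) (by linarith)
    have k11 : (1 + w) ^ r ≤ C * Real.exp (b/2 * w) := by
      have h := hC w hw0
      rwa [max_eq_left hr] at h
    calc Log u ^ r ≤ Real.log x ^ r * (1 + w) ^ r := by rw [← k10]; exact k9
      _ ≤ Real.log x ^ r * (C * Real.exp (b/2 * w)) :=
        mul_le_mul_of_nonneg_left k11 (Real.rpow_nonneg (by linarith) r)
      _ = C * Log x ^ r * Real.exp (b/2 * w) := by rw [hLx]; ring

theorem stmt_0 (a b r : ℝ) (ha : 0 < a) (hb : 0 < b) :
    (∀ x : ℝ, 0 ≤ x →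
      IntegrableOn (fun u : ℝ => u ^ (a - 1) * Log u ^ r * Real.exp (-(b * u ^ a)))
        (Set.Ici x)) ∧
    (fun x : ℝ => ∫ u in Set.Ici x, u ^ (a - 1) * Log u ^ r * Real.exp (-(b * u ^ a)))
      =O[atTop] (fun x : ℝ => (1 + Log x ^ r) * Real.exp (-(b * x ^ a))) := by
  have hb2 : (0:ℝ) < b/2 := by linarith
  have hint : ∀ x : ℝ, 0 ≤ x →
      IntegrableOn (fun u : ℝ => u ^ (a - 1) * Log u ^ r * Real.exp (-(b * u ^ a)))
        (Set.Ici x) := by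
    intro x hx
    rw [integrableOn_Ici_iff_integrableOn_Ioi]
    exact (f_integrableOn0 a b r ha hb).mono_set (Ioi_subset_Ioi hx)
  refine ⟨hint, ?_⟩
  obtain ⟨C, hC1, hev⟩ := evt_bound a b r ha hb
  rw [isBigO_iff]
  refine ⟨C / (a * (b/2)), ?_⟩
  filter_upwards [hev, eventually_ge_atTop (0:ℝ)] with x hx hx0
  have hLxr : (0:ℝ) ≤ Log x ^ r := Real.rpow_nonneg (Log_pos x).le _
  have hFnn : (0:ℝ) ≤ ∫ u in Set.Ici x,
      u ^ (a - 1) * Log u ^ r * Real.exp (-(b * u ^ a)) := by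
    apply setIntegral_nonneg measurableSet_Ici
    intro u hu
    have hu0 : (0:ℝ) ≤ u := le_trans hx0 hu
    exact mul_nonneg (mul_nonneg (Real.rpow_nonneg hu0 _)
      (Real.rpow_nonneg (Log_pos u).le _)) (Real.exp_pos _).le
  rw [Real.norm_eq_abs, abs_of_nonneg hFnn, Real.norm_eq_abs]
  have hI : IntegrableOn (fun u : ℝ => u ^ (a - 1) * Log u ^ r * Real.exp (-(b * u ^ a)))
      (Ioi x) := (f_integrableOn0 a b r ha hb).mono_set (Ioi_subset_Ioi hx0)
  have hJ : IntegrableOn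
      (fun u : ℝ => C * Log x ^ r * Real.exp (-(b/2 * x ^ a))
        * (u ^ (a-1) * Real.exp (-(b/2 * u ^ a)))) (Ioi x) :=
    (key_integrable a (b/2) x ha hb2 hx0).const_mul _
  have hmono : ∫ u in Ioi x, u ^ (a - 1) * Log u ^ r * Real.exp (-(b * u ^ a))
      ≤ ∫ u in Ioi x, C * Log x ^ r * Real.exp (-(b/2 * x ^ a))
        * (u ^ (a-1) * Real.exp (-(b/2 * u ^ a))) := by
    apply setIntegral_mono_on hI hJ measurableSet_Ioi
    intro u hu
    have hux : x ≤ u := (mem_Ioi.mp hu).le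
    have hu0 : (0:ℝ) < u := lt_of_le_of_lt hx0 (mem_Ioi.mp hu)
    have h := hx u hux
    have e : Real.exp (b/2 * (u ^ a - x ^ a)) * Real.exp (-(b * u ^ a))
        = Real.exp (-(b/2 * x ^ a)) * Real.exp (-(b/2 * u ^ a)) := by
      rw [← Real.exp_add, ← Real.exp_add]; ring_nf
    calc u ^ (a - 1) * Log u ^ r * Real.exp (-(b * u ^ a))
        ≤ u ^ (a - 1) * (C * Log x ^ r * Real.exp (b/2 * (u ^ a - x ^ a)))
            * Real.exp (-(b * u ^ a)) :=
          mul_le_mul_of_nonneg_right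
            (mul_le_mul_of_nonneg_left h (Real.rpow_nonneg hu0.le _))
            (Real.exp_pos _).le
      _ = C * Log x ^ r * Real.exp (-(b/2 * x ^ a))
            * (u ^ (a-1) * Real.exp (-(b/2 * u ^ a))) := by
          linear_combination (C * Log x ^ r * u ^ (a - 1)) * e
  have hval : ∫ u in Ioi x, C * Log x ^ r * Real.exp (-(b/2 * x ^ a))
        * (u ^ (a-1) * Real.exp (-(b/2 * u ^ a)))
      = C * Log x ^ r * Real.exp (-(b/2 * x ^ a))
        * (Real.exp (-(b/2 * x ^ a)) / (a * (b/2))) := by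
    rw [MeasureTheory.integral_const_mul, key_value a (b/2) x ha hb2 hx0]
  have e2 : Real.exp (-(b/2 * x ^ a)) * Real.exp (-(b/2 * x ^ a))
      = Real.exp (-(b * x ^ a)) := by
    rw [← Real.exp_add]; ring_nf
  have habK : (0:ℝ) < a * (b/2) := by positivity
  have hfinal : C * Log x ^ r * Real.exp (-(b/2 * x ^ a))
        * (Real.exp (-(b/2 * x ^ a)) / (a * (b/2)))
      = C / (a * (b/2)) * (Log x ^ r * Real.exp (-(b * x ^ a))) := by
    calc C * Log x ^ r * Real.exp (-(b/2 * x ^ a))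
          * (Real.exp (-(b/2 * x ^ a)) / (a * (b/2)))
        = C / (a * (b/2)) * (Log x ^ r
            * (Real.exp (-(b/2 * x ^ a)) * Real.exp (-(b/2 * x ^ a)))) := by ring
      _ = C / (a * (b/2)) * (Log x ^ r * Real.exp (-(b * x ^ a))) := by rw [e2]
  have hRnn : (0:ℝ) ≤ (1 + Log x ^ r) * Real.exp (-(b * x ^ a)) := by
    apply mul_nonneg (by linarith) (Real.exp_pos _).le
  rw [abs_of_nonneg hRnn]
  have hstep : Log x ^ r * Real.exp (-(b * x ^ a))
      ≤ (1 + Log x ^ r) * Real.exp (-(b * x ^ a)) := by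
    apply mul_le_mul_of_nonneg_right (by linarith) (Real.exp_pos _).le
  have hCK : (0:ℝ) ≤ C / (a * (b/2)) := by positivity
  calc ∫ u in Set.Ici x, u ^ (a - 1) * Log u ^ r * Real.exp (-(b * u ^ a))
      = ∫ u in Ioi x, u ^ (a - 1) * Log u ^ r * Real.exp (-(b * u ^ a)) :=
        integral_Ici_eq_integral_Ioi
    _ ≤ C * Log x ^ r * Real.exp (-(b/2 * x ^ a))
        * (Real.exp (-(b/2 * x ^ a)) / (a * (b/2))) := hval ▸ hmono
    _ = C / (a * (b/2)) * (Log x ^ r * Real.exp (-(b * x ^ a))) := hfinal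
    _ ≤ C / (a * (b/2)) * ((1 + Log x ^ r) * Real.exp (-(b * x ^ a))) :=
        mul_le_mul_of_nonneg_left hstep hCK
end

section
/- For all real numbers α and δ with δ > 1, the tail sums satisfy ∑_{k=n}^∞ (Log k)^α / k^δ ~ n^{1-δ} (Log n)^α / (δ - 1) as n → ∞, where Log x := log(max{x, e}). -/
open Filter Asymptotics
open Topology

noncomputable def Gf (α δ : ℝ) (x : ℝ) : ℝ := x ^ (1 - δ) * Real.log x ^ α / (δ - 1)

noncomputable def Df (α δ : ℝ) (x : ℝ) : ℝ :=
  Real.log x ^ α / x ^ δ * (1 - α / ((δ - 1) * Real.log x))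

lemma Log_eq_log {x : ℝ} (hx : 3 ≤ x) : Log x = Real.log x := by
  unfold Log
  rw [max_eq_left]
  linarith [Real.exp_one_lt_d9.le]

lemma log_ge_one {x : ℝ} (hx : 3 ≤ x) : 1 ≤ Real.log x := by
  rw [Real.le_log_iff_exp_le (by linarith)]
  simpa using (by linarith [Real.exp_one_lt_d9.le] : Real.exp 1 ≤ x)

lemma hasDeriv_Gf {α δ : ℝ} (hδ : 1 < δ) {x : ℝ} (hx : 3 ≤ x) :
    HasDerivAt (Gf α δ) (-(Df α δ x)) x := by
  have hx0 : (0:ℝ) < x := by linarith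
  have hL1 : 1 ≤ Real.log x := log_ge_one hx
  have hL0 : (0:ℝ) < Real.log x := by linarith
  have h1 : HasDerivAt (fun y : ℝ => y ^ (1 - δ)) ((1 - δ) * x ^ (1 - δ - 1)) x :=
    Real.hasDerivAt_rpow_const (Or.inl hx0.ne')
  have h2 : HasDerivAt (fun y : ℝ => Real.log y ^ α)
      (α * Real.log x ^ (α - 1) * x⁻¹) x := by
    exact (Real.hasDerivAt_rpow_const (Or.inl hL0.ne')).comp x (Real.hasDerivAt_log hx0.ne')
  have h3 := (h1.mul h2).div_const (δ - 1)
  convert h3 using 1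
  iterate 3 rfl
  have e1 : x ^ (1 - δ - 1) = x ^ (-δ) := by ring_nf
  have e2 : x ^ (1 - δ) = x ^ (-δ) * x := by
    rw [show (1 - δ) = -δ + 1 by ring, Real.rpow_add hx0, Real.rpow_one]
  have e3 : Real.log x ^ α = Real.log x ^ (α - 1) * Real.log x := by
    rw [show α = α - 1 + 1 by ring, Real.rpow_add hL0, Real.rpow_one]
    ring_nf
  have e4 : x ^ δ = (x ^ (-δ))⁻¹ := by
    rw [Real.rpow_neg hx0.le, inv_inv]
  have hxδ : (0:ℝ) < x ^ (-δ) := Real.rpow_pos_of_pos hx0 _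
  have hδ1 : δ - 1 ≠ 0 := by linarith
  rw [Df, e1, e2, e3, e4]
  field_simp
  ring

noncomputable def gg (α δ : ℝ) (k : ℕ) : ℝ := Gf α δ k - Gf α δ (k + 1 : ℕ)

noncomputable def ee (α δ : ℝ) (k : ℕ) : ℝ := |α| / ((δ - 1) * Real.log k)

noncomputable def up (α δ : ℝ) (k : ℕ) : ℝ :=
  max (Real.log k ^ α) (Real.log (k + 1 : ℕ) ^ α) / (k : ℝ) ^ δ * (1 + ee α δ k)

noncomputable def low (α δ : ℝ) (k : ℕ) : ℝ :=
  min (Real.log k ^ α) (Real.log (k + 1 : ℕ) ^ α) / ((k + 1 : ℕ) : ℝ) ^ δ * (1 - ee α δ k)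

lemma Df_bounds {α δ : ℝ} (hδ : 1 < δ) {k : ℕ} (hk : 3 ≤ k) (hek : ee α δ k ≤ 1)
    {x : ℝ} (hx : (k : ℝ) ≤ x) (hx' : x ≤ (k : ℝ) + 1) :
    low α δ k ≤ Df α δ x ∧ Df α δ x ≤ up α δ k := by
  have hk3 : (3:ℝ) ≤ (k:ℝ) := by exact_mod_cast hk
  have hk0 : (0:ℝ) < (k:ℝ) := by linarith
  have hx3 : (3:ℝ) ≤ x := le_trans hk3 hx
  have hx0 : (0:ℝ) < x := by linarith
  have hlk : (1:ℝ) ≤ Real.log k := log_ge_one hk3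
  have hlk0 : (0:ℝ) < Real.log k := by linarith
  have hL1 : 1 ≤ Real.log x := log_ge_one hx3
  have hL0 : (0:ℝ) < Real.log x := by linarith
  have hcast : ((k + 1 : ℕ) : ℝ) = (k : ℝ) + 1 := by push_cast; ring
  have hlogle : Real.log k ≤ Real.log x := Real.log_le_log hk0 hx
  have hlogle' : Real.log x ≤ Real.log ((k + 1 : ℕ) : ℝ) := by
    rw [hcast]; exact Real.log_le_log hx0 hx'
  -- factor 1 : Real.log x ^ α between min and max
  have hP1 : min (Real.log k ^ α) (Real.log (k + 1 : ℕ) ^ α) ≤ Real.log x ^ α ∧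
      Real.log x ^ α ≤ max (Real.log k ^ α) (Real.log (k + 1 : ℕ) ^ α) := by
    rcases le_or_gt 0 α with hα | hα
    · exact ⟨le_trans (min_le_left _ _) (Real.rpow_le_rpow hlk0.le hlogle hα),
        le_trans (Real.rpow_le_rpow hL0.le hlogle' hα) (le_max_right _ _)⟩
    · exact ⟨le_trans (min_le_right _ _) (Real.rpow_le_rpow_of_nonpos hL0 hlogle' hα.le),
        le_trans (Real.rpow_le_rpow_of_nonpos hlk0 hlogle hα.le) (le_max_left _ _)⟩
  -- factor 2 : x ^ δ between k^δ and (k+1)^δ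
  have hP2 : (k : ℝ) ^ δ ≤ x ^ δ := Real.rpow_le_rpow hk0.le hx (by linarith)
  have hP2' : x ^ δ ≤ ((k + 1 : ℕ) : ℝ) ^ δ := by
    rw [hcast]; exact Real.rpow_le_rpow hx0.le hx' (by linarith)
  -- factor 3
  have hδ1 : (0:ℝ) < δ - 1 := by linarith
  have hC : 1 - ee α δ k ≤ 1 - α / ((δ - 1) * Real.log x) ∧
      1 - α / ((δ - 1) * Real.log x) ≤ 1 + ee α δ k := by
    have habs : |α / ((δ - 1) * Real.log x)| ≤ ee α δ k := by
      rw [abs_div, abs_of_pos (by positivity : (0:ℝ) < (δ - 1) * Real.log x)]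
      unfold ee
      apply div_le_div_of_nonneg_left (abs_nonneg α) (by positivity)
      exact mul_le_mul_of_nonneg_left hlogle hδ1.le
    constructor
    · nlinarith [abs_le.1 habs]
    · nlinarith [abs_le.1 habs]
  have hPpos : (0:ℝ) ≤ Real.log x ^ α / x ^ δ := by positivity
  have hmin0 : (0:ℝ) ≤ min (Real.log k ^ α) (Real.log (k + 1 : ℕ) ^ α) :=
    le_min (Real.rpow_nonneg hlk0.le _) (Real.rpow_nonneg (hlk0.le.trans (hlogle.trans hlogle')) _)
  have hmax0 : (0:ℝ) ≤ max (Real.log k ^ α) (Real.log (k + 1 : ℕ) ^ α) :=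
    le_trans (Real.rpow_nonneg hlk0.le _) (le_max_left _ _)
  have hkδ : (0:ℝ) < (k:ℝ) ^ δ := Real.rpow_pos_of_pos hk0 _
  have hk1δ : (0:ℝ) < ((k + 1 : ℕ) : ℝ) ^ δ := by rw [hcast]; positivity
  have hdivU : Real.log x ^ α / x ^ δ ≤
      max (Real.log k ^ α) (Real.log (k + 1 : ℕ) ^ α) / (k : ℝ) ^ δ :=
    div_le_div₀ hmax0 hP1.2 hkδ hP2
  have hdivL : min (Real.log k ^ α) (Real.log (k + 1 : ℕ) ^ α) / ((k + 1 : ℕ) : ℝ) ^ δ ≤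
      Real.log x ^ α / x ^ δ :=
    div_le_div₀ (Real.rpow_nonneg hL0.le _) hP1.1 (by positivity) hP2'
  constructor
  · unfold low Df
    calc min (Real.log k ^ α) (Real.log (k + 1 : ℕ) ^ α) / ((k + 1 : ℕ) : ℝ) ^ δ *
        (1 - ee α δ k)
        ≤ Real.log x ^ α / x ^ δ * (1 - ee α δ k) :=
          mul_le_mul_of_nonneg_right hdivL (by linarith)
      _ ≤ Real.log x ^ α / x ^ δ * (1 - α / ((δ - 1) * Real.log x)) :=
          mul_le_mul_of_nonneg_left hC.1 hPpos
  · unfold up Df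
    have hee0 : (0:ℝ) ≤ ee α δ k := by unfold ee; positivity
    calc Real.log x ^ α / x ^ δ * (1 - α / ((δ - 1) * Real.log x))
        ≤ Real.log x ^ α / x ^ δ * (1 + ee α δ k) := mul_le_mul_of_nonneg_left hC.2 hPpos
      _ ≤ max (Real.log k ^ α) (Real.log (k + 1 : ℕ) ^ α) / (k : ℝ) ^ δ * (1 + ee α δ k) :=
          mul_le_mul_of_nonneg_right hdivU (by linarith)

lemma gg_bounds {α δ : ℝ} (hδ : 1 < δ) {k : ℕ} (hk : 3 ≤ k) (hek : ee α δ k ≤ 1) :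
    low α δ k ≤ gg α δ k ∧ gg α δ k ≤ up α δ k := by
  have hk3 : (3:ℝ) ≤ (k:ℝ) := by exact_mod_cast hk
  obtain ⟨c, hc, hceq⟩ := exists_hasDerivAt_eq_slope (Gf α δ) (fun x => -(Df α δ x))
    (by linarith : (k:ℝ) < (k:ℝ) + 1)
    (fun x hx => (hasDeriv_Gf hδ (by rcases hx with ⟨h1, h2⟩; linarith)).continuousAt.continuousWithinAt)
    (fun x hx => hasDeriv_Gf hδ (by rcases hx with ⟨h1, h2⟩; linarith))
  have hgg : gg α δ k = Df α δ c := by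
    unfold gg
    have : ((k + 1 : ℕ) : ℝ) = (k : ℝ) + 1 := by push_cast; ring
    rw [this]
    have := hceq
    field_simp at this
    linarith
  rw [hgg]
  exact Df_bounds hδ hk hek hc.1.le hc.2.le

lemma tendsto_logk : Tendsto (fun k : ℕ => Real.log k) atTop atTop :=
  Real.tendsto_log_atTop.comp tendsto_natCast_atTop_atTop

lemma tendsto_ee {α δ : ℝ} (hδ : 1 < δ) :
    Tendsto (fun k : ℕ => ee α δ k) atTop (𝓝 0) :=
  Tendsto.div_atTop tendsto_const_nhds
    (Tendsto.const_mul_atTop (by linarith) tendsto_logk)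

lemma tendsto_ratio_log :
    Tendsto (fun k : ℕ => Real.log ((k + 1 : ℕ) : ℝ) / Real.log k) atTop (𝓝 1) := by
  have hub : Tendsto (fun k : ℕ => 1 + Real.log 2 / Real.log k) atTop (𝓝 1) := by
    have := Tendsto.div_atTop (tendsto_const_nhds (x := Real.log 2)) tendsto_logk
    simpa using (tendsto_const_nhds (x := (1:ℝ))).add this
  refine tendsto_of_tendsto_of_tendsto_of_le_of_le' tendsto_const_nhds hub ?_ ?_
  · filter_upwards [eventually_ge_atTop 3] with k hk
    have hk3 : (3:ℝ) ≤ (k:ℝ) := by exact_mod_cast hk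
    have h1 : 1 ≤ Real.log k := log_ge_one hk3
    have h2 : Real.log (k:ℝ) ≤ Real.log ((k + 1 : ℕ) : ℝ) := by
      apply Real.log_le_log (by linarith)
      push_cast; linarith
    rw [le_div_iff₀ (by linarith)]
    linarith
  · filter_upwards [eventually_ge_atTop 3] with k hk
    have hk3 : (3:ℝ) ≤ (k:ℝ) := by exact_mod_cast hk
    have h1 : 1 ≤ Real.log k := log_ge_one hk3
    have h2 : Real.log ((k + 1 : ℕ) : ℝ) ≤ Real.log 2 + Real.log k := by
      rw [← Real.log_mul (by norm_num) (by linarith)]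
      apply Real.log_le_log (by push_cast; linarith)
      push_cast; linarith
    rw [div_le_iff₀ (by linarith)]
    have h3 : Real.log 2 / Real.log k * Real.log k = Real.log 2 :=
      div_mul_cancel₀ _ (by linarith)
    nlinarith

lemma tendsto_rpow_one {α : ℝ} {f : ℕ → ℝ} (hf : Tendsto f atTop (𝓝 1)) :
    Tendsto (fun k => f k ^ α) atTop (𝓝 1) := by
  have hc : ContinuousAt (fun t : ℝ => t ^ α) 1 :=
    Real.continuousAt_rpow_const 1 α (Or.inl one_ne_zero)
  have := hc.tendsto.comp hf
  simpa [Real.one_rpow, Function.comp_def] using this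

noncomputable def flog (α δ : ℝ) (k : ℕ) : ℝ := Real.log k ^ α / (k : ℝ) ^ δ

lemma tendsto_up_ratio {α δ : ℝ} (hδ : 1 < δ) :
    Tendsto (fun k : ℕ => up α δ k / flog α δ k) atTop (𝓝 1) := by
  have hmain : Tendsto (fun k : ℕ =>
      max 1 ((Real.log ((k + 1 : ℕ) : ℝ) / Real.log k) ^ α) * (1 + ee α δ k)) atTop (𝓝 1) := by
    have h1 : Tendsto (fun k : ℕ =>
        max 1 ((Real.log ((k + 1 : ℕ) : ℝ) / Real.log k) ^ α)) atTop (𝓝 1) := by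
      have := (tendsto_const_nhds (x := (1:ℝ))).max (tendsto_rpow_one (α := α) tendsto_ratio_log)
      simpa using this
    have h2 : Tendsto (fun k : ℕ => 1 + ee α δ k) atTop (𝓝 1) := by
      simpa using (tendsto_const_nhds (x := (1:ℝ))).add (tendsto_ee (α := α) hδ)
    simpa using h1.mul h2
  refine hmain.congr' ?_
  filter_upwards [eventually_ge_atTop 3] with k hk
  have hk3 : (3:ℝ) ≤ (k:ℝ) := by exact_mod_cast hk
  have hlk : (1:ℝ) ≤ Real.log k := log_ge_one hk3
  have hlk0 : (0:ℝ) < Real.log k := by linarith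
  have hlk1 : (0:ℝ) ≤ Real.log ((k + 1 : ℕ) : ℝ) := by
    apply Real.log_nonneg; push_cast; linarith
  have hA : (0:ℝ) < Real.log k ^ α := Real.rpow_pos_of_pos hlk0 _
  have hkδ : (0:ℝ) < (k : ℝ) ^ δ := Real.rpow_pos_of_pos (by linarith) _
  have hrw : (Real.log ((k + 1 : ℕ) : ℝ) / Real.log k) ^ α
      = Real.log ((k + 1 : ℕ) : ℝ) ^ α / Real.log k ^ α :=
    Real.div_rpow hlk1 hlk0.le α
  have hmax : max 1 ((Real.log ((k + 1 : ℕ) : ℝ) / Real.log k) ^ α)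
      = max (Real.log k ^ α) (Real.log ((k + 1 : ℕ) : ℝ) ^ α) / Real.log k ^ α := by
    rw [hrw, ← max_div_div_right hA.le, div_self hA.ne']
  rw [hmax]
  unfold up flog
  field_simp

lemma tendsto_low_ratio {α δ : ℝ} (hδ : 1 < δ) :
    Tendsto (fun k : ℕ => low α δ k / flog α δ k) atTop (𝓝 1) := by
  have hq : Tendsto (fun k : ℕ => ((k : ℝ) / ((k : ℝ) + 1)) ^ δ) atTop (𝓝 1) := by
    apply tendsto_rpow_one
    simpa using tendsto_natCast_div_add_atTop (𝕜 := ℝ) 1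
  have hmain : Tendsto (fun k : ℕ =>
      min 1 ((Real.log ((k + 1 : ℕ) : ℝ) / Real.log k) ^ α) *
        ((k : ℝ) / ((k : ℝ) + 1)) ^ δ * (1 - ee α δ k)) atTop (𝓝 1) := by
    have h1 : Tendsto (fun k : ℕ =>
        min 1 ((Real.log ((k + 1 : ℕ) : ℝ) / Real.log k) ^ α)) atTop (𝓝 1) := by
      have := (tendsto_const_nhds (x := (1:ℝ))).min (tendsto_rpow_one (α := α) tendsto_ratio_log)
      simpa using this
    have h2 : Tendsto (fun k : ℕ => 1 - ee α δ k) atTop (𝓝 1) := by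
      simpa using (tendsto_const_nhds (x := (1:ℝ))).sub (tendsto_ee (α := α) hδ)
    simpa using (h1.mul hq).mul h2
  refine hmain.congr' ?_
  filter_upwards [eventually_ge_atTop 3] with k hk
  have hk3 : (3:ℝ) ≤ (k:ℝ) := by exact_mod_cast hk
  have hlk : (1:ℝ) ≤ Real.log k := log_ge_one hk3
  have hlk0 : (0:ℝ) < Real.log k := by linarith
  have hlk1 : (0:ℝ) ≤ Real.log ((k + 1 : ℕ) : ℝ) := by
    apply Real.log_nonneg; push_cast; linarith
  have hA : (0:ℝ) < Real.log k ^ α := Real.rpow_pos_of_pos hlk0 _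
  have hkδ : (0:ℝ) < (k : ℝ) ^ δ := Real.rpow_pos_of_pos (by linarith) _
  have hk1δ : (0:ℝ) < ((k:ℝ) + 1) ^ δ := Real.rpow_pos_of_pos (by linarith) _
  have hrw : (Real.log ((k + 1 : ℕ) : ℝ) / Real.log k) ^ α
      = Real.log ((k + 1 : ℕ) : ℝ) ^ α / Real.log k ^ α :=
    Real.div_rpow hlk1 hlk0.le α
  have hmin : min 1 ((Real.log ((k + 1 : ℕ) : ℝ) / Real.log k) ^ α)
      = min (Real.log k ^ α) (Real.log ((k + 1 : ℕ) : ℝ) ^ α) / Real.log k ^ α := by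
    rw [hrw, ← min_div_div_right hA.le, div_self hA.ne']
  have hqrw : ((k : ℝ) / ((k : ℝ) + 1)) ^ δ = (k : ℝ) ^ δ / ((k:ℝ) + 1) ^ δ :=
    Real.div_rpow (by linarith) (by linarith) δ
  have hcast : ((k + 1 : ℕ) : ℝ) = (k : ℝ) + 1 := by push_cast; ring
  rw [hmin, hqrw]
  unfold low flog
  rw [hcast]
  field_simp

lemma tendsto_gg_ratio {α δ : ℝ} (hδ : 1 < δ) :
    Tendsto (fun k : ℕ => gg α δ k / flog α δ k) atTop (𝓝 1) := by
  refine tendsto_of_tendsto_of_tendsto_of_le_of_le' (tendsto_low_ratio (α := α) hδ)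
    (tendsto_up_ratio (α := α) hδ) ?_ ?_
  · filter_upwards [eventually_ge_atTop 3, (tendsto_ee (α := α) hδ).eventually_lt_const
      (by norm_num : (0:ℝ) < 1)] with k hk hek
    have hk3 : (3:ℝ) ≤ (k:ℝ) := by exact_mod_cast hk
    have hf : (0:ℝ) < flog α δ k := by
      unfold flog
      have hlk0 : (0:ℝ) < Real.log k := by linarith [log_ge_one hk3]
      exact div_pos (Real.rpow_pos_of_pos hlk0 _) (Real.rpow_pos_of_pos (by linarith) _)
    gcongr
    exact (gg_bounds hδ hk hek.le).1
  · filter_upwards [eventually_ge_atTop 3, (tendsto_ee (α := α) hδ).eventually_lt_const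
      (by norm_num : (0:ℝ) < 1)] with k hk hek
    have hk3 : (3:ℝ) ≤ (k:ℝ) := by exact_mod_cast hk
    have hf : (0:ℝ) < flog α δ k := by
      unfold flog
      have hlk0 : (0:ℝ) < Real.log k := by linarith [log_ge_one hk3]
      exact div_pos (Real.rpow_pos_of_pos hlk0 _) (Real.rpow_pos_of_pos (by linarith) _)
    gcongr
    exact (gg_bounds hδ hk hek.le).2

lemma summable_fnat {α δ : ℝ} (hδ : 1 < δ) :
    Summable (fun k : ℕ => Log k ^ α / (k : ℝ) ^ δ) := by
  have hlo : (fun x : ℝ => Real.log x ^ α) =o[atTop] (fun x : ℝ => x ^ ((δ - 1) / 2)) :=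
    isLittleO_log_rpow_rpow_atTop α (by linarith)
  have hlo2 : (fun k : ℕ => Real.log k ^ α) =o[atTop]
      (fun k : ℕ => (k : ℝ) ^ ((δ - 1) / 2)) :=
    hlo.comp_tendsto tendsto_natCast_atTop_atTop
  have hlo3 : (fun k : ℕ => Real.log k ^ α * (k : ℝ) ^ (-δ)) =o[atTop]
      (fun k : ℕ => (k : ℝ) ^ ((δ - 1) / 2) * (k : ℝ) ^ (-δ)) :=
    hlo2.mul_isBigO (isBigO_refl _ _)
  have heq : (fun k : ℕ => (k : ℝ) ^ ((δ - 1) / 2) * (k : ℝ) ^ (-δ)) =ᶠ[atTop]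
      (fun k : ℕ => (k : ℝ) ^ (-(δ + 1) / 2)) := by
    filter_upwards [eventually_ge_atTop 1] with k hk
    have hk0 : (0:ℝ) < (k:ℝ) := by exact_mod_cast hk
    rw [← Real.rpow_add hk0]
    norm_num
    ring_nf
  have heq2 : (fun k : ℕ => Log k ^ α / (k : ℝ) ^ δ) =ᶠ[atTop]
      (fun k : ℕ => Real.log k ^ α * (k : ℝ) ^ (-δ)) := by
    filter_upwards [eventually_ge_atTop 3] with k hk
    have hk3 : (3:ℝ) ≤ (k:ℝ) := by exact_mod_cast hk
    rw [Log_eq_log hk3, Real.rpow_neg (by linarith), div_eq_mul_inv]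
  have hO : (fun k : ℕ => Log k ^ α / (k : ℝ) ^ δ) =O[atTop]
      (fun k : ℕ => (k : ℝ) ^ (-(δ + 1) / 2)) :=
    heq2.trans_isBigO ((hlo3.congr' (EventuallyEq.refl _ _) heq).isBigO)
  exact summable_of_isBigO_nat (Real.summable_nat_rpow.2 (by linarith)) hO

lemma fnat_equiv_gg {α δ : ℝ} (hδ : 1 < δ) :
    (fun k : ℕ => Log k ^ α / (k : ℝ) ^ δ) ~[atTop] gg α δ := by
  have hne : ∀ᶠ k : ℕ in atTop, Log k ^ α / (k : ℝ) ^ δ ≠ 0 := by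
    filter_upwards [eventually_ge_atTop 3] with k hk
    have hk3 : (3:ℝ) ≤ (k:ℝ) := by exact_mod_cast hk
    rw [Log_eq_log hk3]
    have hlk0 : (0:ℝ) < Real.log k := by linarith [log_ge_one hk3]
    positivity
  have hflog : (fun k : ℕ => Log k ^ α / (k : ℝ) ^ δ) =ᶠ[atTop] flog α δ := by
    filter_upwards [eventually_ge_atTop 3] with k hk
    have hk3 : (3:ℝ) ≤ (k:ℝ) := by exact_mod_cast hk
    unfold flog
    rw [Log_eq_log hk3]
  have h1 : Tendsto (fun k : ℕ => gg α δ k / (Log k ^ α / (k : ℝ) ^ δ)) atTop (𝓝 1) := by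
    refine (tendsto_gg_ratio (α := α) hδ).congr' ?_
    filter_upwards [hflog] with k hk
    rw [hk]
  have h2 : gg α δ ~[atTop] (fun k : ℕ => Log k ^ α / (k : ℝ) ^ δ) :=
    (isEquivalent_iff_tendsto_one hne).2 h1
  exact h2.symm

lemma Gf_nonneg {α δ : ℝ} (hδ : 1 < δ) {x : ℝ} (hx : 3 ≤ x) : 0 ≤ Gf α δ x := by
  unfold Gf
  have hx0 : (0:ℝ) < x := by linarith
  have hl : (0:ℝ) < Real.log x := by linarith [log_ge_one hx]
  have h1 : (0:ℝ) < x ^ (1 - δ) := Real.rpow_pos_of_pos hx0 _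
  have h2 : (0:ℝ) < Real.log x ^ α := Real.rpow_pos_of_pos hl _
  exact div_nonneg (mul_nonneg h1.le h2.le) (by linarith)

lemma tendsto_Gf_zero {α δ : ℝ} (hδ : 1 < δ) :
    Tendsto (fun k : ℕ => Gf α δ k) atTop (𝓝 0) := by
  have hlo : (fun x : ℝ => Real.log x ^ α) =o[atTop] (fun x : ℝ => x ^ (δ - 1)) :=
    isLittleO_log_rpow_rpow_atTop α (by linarith)
  have h0 : Tendsto (fun k : ℕ => Real.log k ^ α / (k : ℝ) ^ (δ - 1)) atTop (𝓝 0) :=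
    (hlo.comp_tendsto tendsto_natCast_atTop_atTop).tendsto_div_nhds_zero
  have h1 : Tendsto (fun k : ℕ => Real.log k ^ α / (k : ℝ) ^ (δ - 1) / (δ - 1))
      atTop (𝓝 0) := by simpa using h0.div_const (δ - 1)
  refine h1.congr' ?_
  filter_upwards [eventually_ge_atTop 1] with k hk
  have hk0 : (0:ℝ) < (k:ℝ) := by exact_mod_cast hk
  unfold Gf
  rw [show (1 - δ) = -(δ - 1) by ring, Real.rpow_neg hk0.le]
  field_simp

lemma gg_tail {α δ : ℝ} (hδ : 1 < δ) :
    ∃ N : ℕ, 3 ≤ N ∧ (∀ k, N ≤ k → 0 ≤ gg α δ k) ∧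
      ∀ n, N ≤ n → Summable (fun k => gg α δ (n + k)) ∧ (∑' k, gg α δ (n + k)) = Gf α δ n := by
  have hev : ∀ᶠ k : ℕ in atTop, 0 ≤ gg α δ k := by
    filter_upwards [eventually_ge_atTop 3, (tendsto_ee (α := α) hδ).eventually_lt_const
      (by norm_num : (0:ℝ) < 1)] with k hk hek
    refine le_trans ?_ (gg_bounds hδ hk hek.le).1
    unfold low
    have hk3 : (3:ℝ) ≤ (k:ℝ) := by exact_mod_cast hk
    have hlk0 : (0:ℝ) < Real.log k := by linarith [log_ge_one hk3]
    have hlk1 : (0:ℝ) < Real.log ((k + 1 : ℕ) : ℝ) := by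
      have : (3:ℝ) ≤ ((k + 1 : ℕ) : ℝ) := by push_cast; linarith
      linarith [log_ge_one this]
    have h1 : (0:ℝ) ≤ min (Real.log k ^ α) (Real.log ((k + 1 : ℕ) : ℝ) ^ α) :=
      le_min (Real.rpow_nonneg hlk0.le _) (Real.rpow_nonneg hlk1.le _)
    have h2 : (0:ℝ) < ((k + 1 : ℕ) : ℝ) ^ δ :=
      Real.rpow_pos_of_pos (by push_cast; linarith) _
    have h3 : (0:ℝ) ≤ 1 - ee α δ k := by linarith
    positivity
  obtain ⟨N₀, hN₀⟩ := eventually_atTop.1 hev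
  refine ⟨max N₀ 3, le_max_right _ _, fun k hk => hN₀ k (le_trans (le_max_left _ _) hk), ?_⟩
  intro n hn
  have hn3 : 3 ≤ n := le_trans (le_max_right _ _) hn
  have hnonneg : ∀ k, 0 ≤ gg α δ (n + k) := fun k =>
    hN₀ (n + k) (le_trans (le_trans (le_max_left _ _) hn) (Nat.le_add_right n k))
  have hS : ∀ m : ℕ, ∑ i ∈ Finset.range m, gg α δ (n + i)
      = Gf α δ ((n : ℕ) : ℝ) - Gf α δ ((n + m : ℕ) : ℝ) := by
    intro m
    calc ∑ i ∈ Finset.range m, gg α δ (n + i)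
        = ∑ i ∈ Finset.range m,
            (Gf α δ ((n + i : ℕ) : ℝ) - Gf α δ ((n + (i + 1) : ℕ) : ℝ)) := by
          refine Finset.sum_congr rfl fun i _ => ?_
          simp [gg, Nat.add_assoc]
      _ = Gf α δ ((n + 0 : ℕ) : ℝ) - Gf α δ ((n + m : ℕ) : ℝ) :=
          Finset.sum_range_sub' (f := fun i => Gf α δ ((n + i : ℕ) : ℝ)) m
      _ = Gf α δ ((n : ℕ) : ℝ) - Gf α δ ((n + m : ℕ) : ℝ) := by norm_num
  have hbdd : ∀ m : ℕ, ∑ i ∈ Finset.range m, gg α δ (n + i) ≤ Gf α δ n := by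
    intro m
    rw [hS m]
    have : (0:ℝ) ≤ Gf α δ ((n + m : ℕ) : ℝ) := by
      apply Gf_nonneg hδ
      have : 3 ≤ n + m := le_trans hn3 (Nat.le_add_right n m)
      exact_mod_cast this
    linarith
  have hsum : Summable (fun k => gg α δ (n + k)) :=
    summable_of_sum_range_le hnonneg hbdd
  refine ⟨hsum, ?_⟩
  have ht1 : Tendsto (fun m : ℕ => ∑ i ∈ Finset.range m, gg α δ (n + i)) atTop
      (𝓝 (∑' k, gg α δ (n + k))) := hsum.hasSum.tendsto_sum_nat
  have ht2 : Tendsto (fun m : ℕ => ∑ i ∈ Finset.range m, gg α δ (n + i)) atTop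
      (𝓝 (Gf α δ n)) := by
    have hcomp : Tendsto (fun m : ℕ => Gf α δ ((n + m : ℕ) : ℝ)) atTop (𝓝 0) := by
      have := (tendsto_Gf_zero (α := α) (δ := δ) hδ).comp (tendsto_add_atTop_nat n)
      exact this.congr fun m => by simp [Function.comp, Nat.add_comm]
    have := (tendsto_const_nhds (x := Gf α δ (n : ℝ))).sub hcomp
    simp only [sub_zero] at this
    refine this.congr ?_
    intro m
    rw [hS m]
  exact tendsto_nhds_unique ht1 ht2

theorem stmt_2 (α δ : ℝ) (hδ : 1 < δ) :
    (fun n : ℕ => ∑' k : ℕ, Log ((n + k : ℕ) : ℝ) ^ α / ((n + k : ℕ) : ℝ) ^ δ)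
      ~[atTop] (fun n : ℕ => (n : ℝ) ^ (1 - δ) * Log n ^ α / (δ - 1)) := by
  have hsumF : Summable (fun k : ℕ => Log k ^ α / (k : ℝ) ^ δ) := summable_fnat hδ
  have hFgg : (fun k : ℕ => Log k ^ α / (k : ℝ) ^ δ) ~[atTop] gg α δ := fnat_equiv_gg hδ
  obtain ⟨N, hN3, hggnn, htail⟩ := gg_tail (α := α) hδ
  have hTequiv : (fun n : ℕ => ∑' k : ℕ, Log ((n + k : ℕ) : ℝ) ^ α / ((n + k : ℕ) : ℝ) ^ δ)
      ~[atTop] (fun n : ℕ => Gf α δ n) := by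
    rw [IsEquivalent]
    apply isLittleO_iff.2
    intro c hc
    have hko := isLittleO_iff.1 hFgg.isLittleO hc
    obtain ⟨M₀, hM₀⟩ := eventually_atTop.1 hko
    filter_upwards [eventually_ge_atTop (max M₀ N)] with n hn
    have hnN : N ≤ n := le_trans (le_max_right _ _) hn
    have hnM₀ : M₀ ≤ n := le_trans (le_max_left _ _) hn
    have hn3 : (3:ℝ) ≤ (n:ℝ) := by exact_mod_cast le_trans hN3 hnN
    obtain ⟨hsumg, htsum⟩ := htail n hnN
    have hsumFt : Summable (fun k : ℕ => Log ((n + k : ℕ) : ℝ) ^ α / ((n + k : ℕ) : ℝ) ^ δ) :=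
      ((summable_nat_add_iff n).2 hsumF).congr fun k => by rw [Nat.add_comm]
    have hbound : ∀ k : ℕ,
        ‖Log ((n + k : ℕ) : ℝ) ^ α / ((n + k : ℕ) : ℝ) ^ δ - gg α δ (n + k)‖
          ≤ c * gg α δ (n + k) := by
      intro k
      have h1 := hM₀ (n + k) (le_trans hnM₀ (Nat.le_add_right n k))
      have h2 : 0 ≤ gg α δ (n + k) := hggnn (n + k) (le_trans hnN (Nat.le_add_right n k))
      rwa [Real.norm_of_nonneg h2] at h1
    have hsumnorm : Summable (fun k : ℕ =>
        ‖Log ((n + k : ℕ) : ℝ) ^ α / ((n + k : ℕ) : ℝ) ^ δ - gg α δ (n + k)‖) :=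
      Summable.of_nonneg_of_le (fun k => norm_nonneg _) hbound (hsumg.mul_left c)
    calc ‖(∑' k : ℕ, Log ((n + k : ℕ) : ℝ) ^ α / ((n + k : ℕ) : ℝ) ^ δ) - Gf α δ n‖
        = ‖∑' k : ℕ, (Log ((n + k : ℕ) : ℝ) ^ α / ((n + k : ℕ) : ℝ) ^ δ - gg α δ (n + k))‖ := by
          rw [Summable.tsum_sub hsumFt hsumg, htsum]
      _ ≤ ∑' k : ℕ, ‖Log ((n + k : ℕ) : ℝ) ^ α / ((n + k : ℕ) : ℝ) ^ δ - gg α δ (n + k)‖ :=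
          norm_tsum_le_tsum_norm hsumnorm
      _ ≤ ∑' k : ℕ, c * gg α δ (n + k) := Summable.tsum_le_tsum hbound hsumnorm (hsumg.mul_left c)
      _ = c * Gf α δ n := by rw [tsum_mul_left, htsum]
      _ = c * ‖Gf α δ n‖ := by rw [Real.norm_of_nonneg (Gf_nonneg hδ hn3)]
  have h2 : (fun n : ℕ => Gf α δ n) =ᶠ[atTop]
      (fun n : ℕ => (n : ℝ) ^ (1 - δ) * Log n ^ α / (δ - 1)) := by
    filter_upwards [eventually_ge_atTop 3] with n hn
    have hn3 : (3:ℝ) ≤ (n:ℝ) := by exact_mod_cast hn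
    unfold Gf
    rw [Log_eq_log hn3]
  exact hTequiv.trans h2.isEquivalent
end

section
/- Let {X_n, n ≥ 1} be nonnegative random variables with E X_n < ∞, {b_n} a nondecreasing unbounded sequence of positive constants, and {a_n} nonnegative constants. Suppose there exist increasing unbounded sequences of positive integers {m_k}, {ℓ_k} such that: (i) limsup_k b_{m_{k+1}}/b_{m_k} < ∞ and liminf_k ∑_{j=m_k}^{m_{k+1}-1} a_j > 0; (ii) ∑_{j=ℓ_k+1}^{ℓ_{k+1}} E X_j = o(b_{ℓ_k}) as k → ∞; (iii) for all ε > 0, ∑_{k=1}^∞ P(max_{1 ≤ n ≤ k+1} |∑_{i=1}^{ℓ_n} (X_i - E X_i)| > ε b_{ℓ_k}) · ∑_{j=ℓ_k+1}^{ℓ_{k+1}} a_j < ∞. Then (1/b_n) ∑_{k=1}^n (X_k - E X_k) → 0 almost surely. -/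
open MeasureTheory Filter
open scoped ENNReal NNReal Topology

theorem stmt_15 {Ω : Type*} [MeasurableSpace Ω] (μ : Measure Ω) [IsProbabilityMeasure μ]
    (X : ℕ → Ω → ℝ) (hXnn : ∀ n ω, 0 ≤ X n ω) (hXint : ∀ n, Integrable (X n) μ)
    (b : ℕ → ℝ) (hbpos : ∀ n, 0 < b n) (hbmono : Monotone b)
    (hbtop : Tendsto b atTop atTop)
    (a : ℕ → ℝ) (hann : ∀ n, 0 ≤ a n)
    (m ℓ : ℕ → ℕ) (hm : StrictMono m) (hℓ : StrictMono ℓ)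
    (hm1 : ∀ k, 1 ≤ m k) (hℓ1 : ∀ k, 1 ≤ ℓ k)
    (hi1 : ∃ M : ℝ, ∀ᶠ k in atTop, b (m (k + 1)) / b (m k) ≤ M)
    (hi2 : ∃ δ : ℝ, 0 < δ ∧
      ∀ᶠ k in atTop, δ ≤ ∑ j ∈ Finset.Ico (m k) (m (k + 1)), a j)
    (hii : Tendsto (fun k : ℕ =>
      (∑ j ∈ Finset.Ioc (ℓ k) (ℓ (k + 1)), ∫ ω, X j ω ∂μ) / b (ℓ k)) atTop (nhds 0))
    (hiii : ∀ ε : ℝ, 0 < ε →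
      Summable (fun k : ℕ =>
        (μ {ω | ∃ n ∈ Finset.Icc 1 (k + 1),
            ε * b (ℓ k) < |∑ i ∈ Finset.Icc 1 (ℓ n), (X i ω - ∫ ω', X i ω' ∂μ)|}).toReal *
          ∑ j ∈ Finset.Ioc (ℓ k) (ℓ (k + 1)), a j)) :
    ∀ᵐ ω ∂μ, Tendsto (fun n : ℕ =>
      (∑ k ∈ Finset.Icc 1 n, (X k ω - ∫ ω', X k ω' ∂μ)) / b n) atTop (nhds 0) := by
  classical
  obtain ⟨M₀, hM₀⟩ := hi1
  obtain ⟨K1, hM₀⟩ := eventually_atTop.mp hM₀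
  obtain ⟨δ, hδ, hδk⟩ := hi2
  obtain ⟨K2, hδk⟩ := eventually_atTop.mp hδk
  set M : ℝ := max M₀ 1 with hMdef
  have hM1 : (1:ℝ) ≤ M := le_max_right _ _
  have hM0 : (0:ℝ) < M := lt_of_lt_of_le one_pos hM1
  have hMk : ∀ k, K1 ≤ k → b (m (k + 1)) ≤ M * b (m k) := by
    intro k hk
    have h := hM₀ k hk
    have hb := hbpos (m k)
    have h2 : b (m (k + 1)) ≤ M₀ * b (m k) := (div_le_iff₀ hb).mp h
    have h3 : M₀ ≤ M := le_max_left _ _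
    nlinarith
  -- abbreviations
  set S : ℕ → Ω → ℝ := fun n ω => ∑ i ∈ Finset.Icc 1 n, (X i ω - ∫ ω', X i ω' ∂μ) with hSdef
  set W : ℕ → ℝ := fun k => ∑ j ∈ Finset.Ioc (ℓ k) (ℓ (k + 1)), a j with hWdef
  set B : ℝ → ℕ → Set Ω :=
    fun ε k => {ω | ∃ n ∈ Finset.Icc 1 (k + 1), ε * b (ℓ k) < |S (ℓ n) ω|} with hBdef
  have hWnn : ∀ k, 0 ≤ W k := by
    intro k; rw [hWdef]; exact Finset.sum_nonneg fun j _ => hann j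
  have hiii' : ∀ ε : ℝ, 0 < ε → Summable (fun k => (μ (B ε k)).toReal * W k) := by
    intro ε hε
    have h := hiii ε hε
    simpa only [hBdef, hWdef, hSdef] using h
  -- telescoping
  have htel : ∀ k r : ℕ, k ≤ r →
      ∑ k' ∈ Finset.Icc k r, W k' = ∑ j ∈ Finset.Ioc (ℓ k) (ℓ (r + 1)), a j := by
    intro k r hr
    induction r, hr using Nat.le_induction with
    | base => simp [hWdef]
    | succ r hr ih =>
      rw [Finset.sum_Icc_succ_top (by omega), ih, hWdef]
      exact Finset.sum_Ioc_consecutive _ (hℓ.monotone (by omega)) (hℓ.monotone (by omega))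
  set K : ℕ := max K1 K2 with hKdef
  set k0 : ℕ := m (K + 1) with hk0def
  have hbℓ : Tendsto (fun k => b (ℓ k)) atTop atTop := hbtop.comp hℓ.tendsto_atTop
  -- the block lemma
  have hblock : ∀ k, k0 ≤ k → ∃ r, k ≤ r ∧
      (∀ k', k ≤ k' → k' ≤ r → b (ℓ k') ≤ M ^ 2 * b (ℓ k)) ∧
      δ ≤ ∑ k' ∈ Finset.Icc k r, W k' := by
    intro k hk
    have hℓk : m (K + 1) ≤ ℓ k := le_trans (le_trans hℓ.le_apply (hℓ.monotone hk)) le_rfl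
    have hexq : ∃ q, k < q ∧ M ^ 2 * b (ℓ k) < b (ℓ q) :=
      ((eventually_gt_atTop k).and (hbℓ.eventually_gt_atTop (M ^ 2 * b (ℓ k)))).exists
    obtain ⟨hkq, hbq⟩ := Nat.find_spec hexq
    set q := Nat.find hexq with hqdef
    have hbound : ∀ k', k ≤ k' → k' < q → b (ℓ k') ≤ M ^ 2 * b (ℓ k) := by
      intro k' h1 h2
      rcases eq_or_lt_of_le h1 with h1 | h1
      · subst h1; nlinarith [hbpos (ℓ k), hM1, sq_nonneg (M - 1)]
      · have h3 := Nat.find_min hexq h2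
        push_neg at h3
        exact h3 h1
    have hexi : ∃ i, ℓ k < m i := (hm.tendsto_atTop.eventually_gt_atTop (ℓ k)).exists
    have him : ℓ k < m (Nat.find hexi) := Nat.find_spec hexi
    set i := Nat.find hexi with hidef
    have hiK : K + 1 < i := by
      by_contra h
      push_neg at h
      have := hm.monotone h
      omega
    have hprev : m (i - 1) ≤ ℓ k := by
      by_contra h
      push_neg at h
      exact Nat.find_min hexi (by omega) h
    have hb1 : b (m i) ≤ M * b (ℓ k) := by
      have h := hMk (i - 1) (by omega)
      rw [show i - 1 + 1 = i by omega] at h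
      have := mul_le_mul_of_nonneg_left (hbmono hprev) hM0.le
      linarith
    have hb2 : b (m (i + 1)) ≤ M ^ 2 * b (ℓ k) := by
      have h := hMk i (by omega)
      have := mul_le_mul_of_nonneg_left hb1 hM0.le
      nlinarith
    have hmi1 : m (i + 1) ≤ ℓ q := by
      by_contra h
      push_neg at h
      have := hbmono h.le
      linarith
    have hsub : Finset.Ico (m i) (m (i + 1)) ⊆ Finset.Ioc (ℓ k) (ℓ q) := by
      intro j hj
      simp only [Finset.mem_Ico, Finset.mem_Ioc] at hj ⊢
      omega
    refine ⟨q - 1, by omega, fun k' h1 h2 => hbound k' h1 (by omega), ?_⟩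
    rw [htel k (q - 1) (by omega), show q - 1 + 1 = q from by omega]
    calc δ ≤ ∑ j ∈ Finset.Ico (m i) (m (i + 1)), a j := hδk i (by omega)
      _ ≤ ∑ j ∈ Finset.Ioc (ℓ k) (ℓ q), a j :=
          Finset.sum_le_sum_of_subset_of_nonneg hsub fun j _ _ => hann j
  -- key a.e. lemma
  have key : ∀ ε : ℝ, 0 < ε → ∀ᵐ ω ∂μ, ∀ᶠ k in atTop,
      ∀ n ∈ Finset.Icc 1 (k + 1), |S (ℓ n) ω| ≤ ε * b (ℓ k) := by
    intro ε hε
    set ε' : ℝ := ε / M ^ 2 with hε'def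
    have hε' : 0 < ε' := by rw [hε'def]; positivity
    have hεM : ε' * M ^ 2 = ε := by rw [hε'def]; field_simp
    have hsummable := hiii' ε' hε'
    set C : ℕ → Set Ω := fun k => toMeasurable μ (B ε' k) with hCdef
    set g : ℕ → Ω → ℝ≥0∞ := fun k => (C k).indicator (fun _ => ENNReal.ofReal (W k)) with hgdef
    have hgmeas : ∀ k, Measurable (g k) := fun k =>
      measurable_const.indicator (measurableSet_toMeasurable _ _)
    have hlint : ∫⁻ ω, ∑' k, g k ω ∂μ ≠ ∞ := by
      rw [lintegral_tsum fun k => (hgmeas k).aemeasurable]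
      have heq : ∀ k, ∫⁻ ω, g k ω ∂μ = ENNReal.ofReal ((μ (B ε' k)).toReal * W k) := by
        intro k
        rw [hgdef]
        simp only
        rw [lintegral_indicator_const (measurableSet_toMeasurable _ _), measure_toMeasurable]
        rw [mul_comm, ← ENNReal.ofReal_toReal (measure_ne_top μ (B ε' k)),
          ← ENNReal.ofReal_mul ENNReal.toReal_nonneg, ENNReal.ofReal_toReal
            (measure_ne_top μ (B ε' k))]
      rw [tsum_congr heq, ← ENNReal.ofReal_tsum_of_nonneg
        (fun k => mul_nonneg ENNReal.toReal_nonneg (hWnn k)) hsummable]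
      exact ENNReal.ofReal_ne_top
    have hae : ∀ᵐ ω ∂μ, ∑' k, g k ω < ∞ :=
      ae_lt_top (Measurable.ennreal_tsum hgmeas) hlint
    filter_upwards [hae] with ω hω
    have htail : Tendsto (fun K => ∑' j, g (j + K) ω) atTop (𝓝 0) :=
      ENNReal.tendsto_sum_nat_add (fun k => g k ω) hω.ne
    obtain ⟨K3, hK3⟩ := eventually_atTop.mp
      (htail.eventually (gt_mem_nhds (ENNReal.ofReal_pos.mpr hδ)))
    rw [eventually_atTop]
    refine ⟨max k0 K3, fun k hk => ?_⟩
    by_contra hcon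
    push_neg at hcon
    obtain ⟨n, hn, hlt⟩ := hcon
    obtain ⟨r, hkr, hbr, hδr⟩ := hblock k (le_trans (le_max_left _ _) hk)
    have hmem : ∀ k', k ≤ k' → k' ≤ r → ω ∈ C k' := by
      intro k' h1 h2
      refine subset_toMeasurable _ _ ?_
      refine ⟨n, ?_, ?_⟩
      · simp only [Finset.mem_Icc] at hn ⊢; omega
      · calc ε' * b (ℓ k') ≤ ε' * (M ^ 2 * b (ℓ k)) :=
              mul_le_mul_of_nonneg_left (hbr k' h1 h2) hε'.le
          _ = ε * b (ℓ k) := by rw [← hεM]; ring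
          _ < |S (ℓ n) ω| := hlt
    have hge : ENNReal.ofReal δ ≤ ∑' j, g (j + k) ω := by
      calc ENNReal.ofReal δ ≤ ENNReal.ofReal (∑ k' ∈ Finset.Icc k r, W k') :=
            ENNReal.ofReal_le_ofReal hδr
        _ = ∑ k' ∈ Finset.Icc k r, ENNReal.ofReal (W k') :=
            ENNReal.ofReal_sum_of_nonneg fun k' _ => hWnn k'
        _ = ∑ k' ∈ Finset.Icc k r, g k' ω := by
            refine Finset.sum_congr rfl fun k' hk' => ?_
            simp only [Finset.mem_Icc] at hk'
            rw [hgdef]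
            simp only
            rw [Set.indicator_of_mem (hmem k' hk'.1 hk'.2)]
        _ = ∑ j ∈ Finset.range (r + 1 - k), g (j + k) ω := by
            rw [← Finset.Ico_add_one_right_eq_Icc, Finset.sum_Ico_eq_sum_range]
            exact Finset.sum_congr rfl fun j _ => by rw [Nat.add_comm]
        _ ≤ ∑' j, g (j + k) ω := ENNReal.sum_le_tsum _
    exact lt_irrefl _ (lt_of_le_of_lt hge (hK3 k (le_trans (le_max_right _ _) hk)))
  -- combine over countably many ε
  have key' : ∀ᵐ ω ∂μ, ∀ j : ℕ, ∀ᶠ k in atTop, ∀ n ∈ Finset.Icc 1 (k + 1),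
      |S (ℓ n) ω| ≤ (1 / (j + 1 : ℝ)) * b (ℓ k) :=
    ae_all_iff.mpr fun j => key (1 / (j + 1)) (by positivity)
  filter_upwards [key'] with ω hω
  have hωε : ∀ ε : ℝ, 0 < ε → ∀ᶠ k in atTop, ∀ n ∈ Finset.Icc 1 (k + 1),
      |S (ℓ n) ω| ≤ ε * b (ℓ k) := by
    intro ε hε
    obtain ⟨j, hj⟩ := exists_nat_one_div_lt hε
    refine (hω j).mono fun k h n hn => le_trans (h n hn) ?_
    exact mul_le_mul_of_nonneg_right hj.le (hbpos (ℓ k)).le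
  have hgoal : Tendsto (fun n : ℕ => S n ω / b n) atTop (nhds 0) := by
    rw [Metric.tendsto_atTop]
    intro ε hε
    obtain ⟨K5, hK5⟩ := eventually_atTop.mp (hωε (ε / 4) (by positivity))
    obtain ⟨K4, hK4⟩ := eventually_atTop.mp
      (hii.eventually (gt_mem_nhds (show (0:ℝ) < ε / 4 by positivity)))
    set N0 : ℕ := max (max K4 K5) 1 with hN0def
    refine ⟨ℓ N0 + 1, fun n hn => ?_⟩
    have hℓN0 : ℓ N0 < n := by omega
    set k := Nat.findGreatest (fun k => ℓ k < n) n with hkdef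
    have hN0n : N0 ≤ n := le_trans hℓ.le_apply hℓN0.le
    have hkw : N0 ≤ k := by
      rw [hkdef]; exact Nat.le_findGreatest (P := fun j => ℓ j < n) hN0n hℓN0
    have hk1 : ℓ k < n := by
      have h := Nat.findGreatest_spec (P := fun j => ℓ j < n) hN0n hℓN0
      rwa [← hkdef] at h
    have hk2 : n ≤ ℓ (k + 1) := by
      by_contra h
      push_neg at h
      have hle : k + 1 ≤ ℓ (k + 1) := hℓ.le_apply
      have h2 := Nat.le_findGreatest (P := fun j => ℓ j < n) (show k + 1 ≤ n by omega) h
      rw [← hkdef] at h2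
      omega
    have hK5k := hK5 k (le_trans (le_trans (le_max_right _ _) (le_max_left _ _)) hkw)
    have hk1' : 1 ≤ k := le_trans (le_max_right _ _) hkw
    have hSk : |S (ℓ k) ω| ≤ ε / 4 * b (ℓ k) := hK5k k (by simp [Finset.mem_Icc]; omega)
    have hSk1 : |S (ℓ (k + 1)) ω| ≤ ε / 4 * b (ℓ k) := hK5k (k + 1) (by simp [Finset.mem_Icc])
    have hDk : (∑ j ∈ Finset.Ioc (ℓ k) (ℓ (k + 1)), ∫ ω', X j ω' ∂μ) ≤ ε / 4 * b (ℓ k) := by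
      have h := hK4 k (le_trans (le_trans (le_max_left _ _) (le_max_left _ _)) hkw)
      rw [div_lt_iff₀ (hbpos (ℓ k))] at h
      linarith
    -- sandwich
    have hSsplit : ∀ u v : ℕ, u ≤ v →
        S v ω - S u ω = ∑ i ∈ Finset.Ioc u v, (X i ω - ∫ ω', X i ω' ∂μ) := by
      intro u v huv
      rw [hSdef]
      simp only
      rw [show Finset.Icc 1 v = Finset.Ioc 0 v from Finset.Icc_add_one_left_eq_Ioc 0 v,
        show Finset.Icc 1 u = Finset.Ioc 0 u from Finset.Icc_add_one_left_eq_Ioc 0 u,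
        ← Finset.sum_Ioc_consecutive _ (Nat.zero_le u) huv]
      ring
    have hup : S n ω ≤ S (ℓ (k + 1)) ω + ∑ j ∈ Finset.Ioc (ℓ k) (ℓ (k + 1)), ∫ ω', X j ω' ∂μ := by
      have h1 := hSsplit n (ℓ (k + 1)) hk2
      have h2 : -(∑ i ∈ Finset.Ioc n (ℓ (k + 1)), ∫ ω', X i ω' ∂μ) ≤
          ∑ i ∈ Finset.Ioc n (ℓ (k + 1)), (X i ω - ∫ ω', X i ω' ∂μ) := by
        rw [neg_le, ← Finset.sum_neg_distrib]
        exact Finset.sum_le_sum fun i _ => by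
          have := hXnn i ω; linarith
      have h3 : (∑ i ∈ Finset.Ioc n (ℓ (k + 1)), ∫ ω', X i ω' ∂μ) ≤
          ∑ j ∈ Finset.Ioc (ℓ k) (ℓ (k + 1)), ∫ ω', X j ω' ∂μ := by
        refine Finset.sum_le_sum_of_subset_of_nonneg ?_ fun j _ _ => integral_nonneg (hXnn j)
        intro j hj
        simp only [Finset.mem_Ioc] at hj ⊢
        omega
      linarith
    have hlo : S (ℓ k) ω - (∑ j ∈ Finset.Ioc (ℓ k) (ℓ (k + 1)), ∫ ω', X j ω' ∂μ) ≤ S n ω := by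
      have h1 := hSsplit (ℓ k) n hk1.le
      have h2 : -(∑ i ∈ Finset.Ioc (ℓ k) n, ∫ ω', X i ω' ∂μ) ≤
          ∑ i ∈ Finset.Ioc (ℓ k) n, (X i ω - ∫ ω', X i ω' ∂μ) := by
        rw [neg_le, ← Finset.sum_neg_distrib]
        exact Finset.sum_le_sum fun i _ => by
          have := hXnn i ω; linarith
      have h3 : (∑ i ∈ Finset.Ioc (ℓ k) n, ∫ ω', X i ω' ∂μ) ≤
          ∑ j ∈ Finset.Ioc (ℓ k) (ℓ (k + 1)), ∫ ω', X j ω' ∂μ := by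
        refine Finset.sum_le_sum_of_subset_of_nonneg ?_ fun j _ _ => integral_nonneg (hXnn j)
        intro j hj
        simp only [Finset.mem_Ioc] at hj ⊢
        omega
      linarith
    have hεb : 0 ≤ ε / 4 * b (ℓ k) := mul_nonneg (by linarith) (hbpos _).le
    have habs : |S n ω| ≤ 3 * ε / 4 * b (ℓ k) := by
      rw [abs_le]
      constructor
      · have := neg_abs_le (S (ℓ k) ω)
        linarith
      · have := le_abs_self (S (ℓ (k + 1)) ω)
        linarith
    have hbn : b (ℓ k) ≤ b n := hbmono hk1.le
    have hbn0 : 0 < b n := hbpos n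
    rw [Real.dist_eq, sub_zero, abs_div, abs_of_pos hbn0, div_lt_iff₀ hbn0]
    have h4 : 3 * ε / 4 * b (ℓ k) ≤ 3 * ε / 4 * b n :=
      mul_le_mul_of_nonneg_left hbn (by positivity)
    nlinarith [mul_pos hε hbn0]
  simpa only [hSdef] using hgoal
end
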